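/- Any sequence of transactions can be reordered into a canonical order by a sequence of adjacent swaps of non-conflicting pairs, provided any two transactions that are out of order relative to the canonical order are non-conflicting; the resulting execution yields the same final state and same per-transaction results. -/

import Mathlib

/-- Final state after executing a list of transactions. -/
def execState {K V Res τ : Type*} (apply : τ → (K → V) → (K → V) × Res) :
    List τ → (K → V) → (K → V)
  | [], σ => σ
  | T :: L, σ => execState apply L (apply T σ).1

/-- Per-transaction results of executing a list of transactions. -/
def execResults {K V Res τ : Type*} (apply : τ → (K → V) → (K → V) × Res) :
    List τ → (K → V) → List (τ × Res)
  | [], _ => []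
  | T :: L, σ => (T, (apply T σ).2) :: execResults apply L (apply T σ).1

/-- Two transactions conflict if one's write set meets the other's footprint. -/
def conflict {K Res V τ : Type*} (R W : τ → Set K)
    (_apply : τ → (K → V) → (K → V) × Res) (T1 T2 : τ) : Prop :=
  (W T1 ∩ (R T2 ∪ W T2)).Nonempty ∨ (W T2 ∩ (R T1 ∪ W T1)).Nonempty

section Aux
variable {K V Res τ : Type*} (R W : τ → Set K) (apply : τ → (K → V) → (K → V) × Res)

/-- Non-conflicting transactions commute: same resulting state and same results. -/
lemma comm_key
    (hmod : ∀ T σ k, k ∉ W T → (apply T σ).1 k = σ k)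
    (hdep : ∀ T σ σ', (∀ k ∈ R T, σ k = σ' k) →
      (apply T σ).2 = (apply T σ').2 ∧ ∀ k ∈ W T, (apply T σ).1 k = (apply T σ').1 k)
    {T1 T2 : τ} (h : ¬ conflict R W apply T1 T2) (σ : K → V) :
    (apply T2 (apply T1 σ).1).1 = (apply T1 (apply T2 σ).1).1 ∧
    (apply T1 σ).2 = (apply T1 (apply T2 σ).1).2 ∧
    (apply T2 σ).2 = (apply T2 (apply T1 σ).1).2 := by
  rw [conflict, not_or] at h
  obtain ⟨h1, h2⟩ := h
  have d1 : ∀ k ∈ W T1, k ∉ R T2 ∧ k ∉ W T2 := by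
    intro k hk
    constructor <;> intro hk2 <;> exact h1 ⟨k, hk, by simp [hk2]⟩
  have d2 : ∀ k ∈ W T2, k ∉ R T1 ∧ k ∉ W T1 := by
    intro k hk
    constructor <;> intro hk2 <;> exact h2 ⟨k, hk, by simp [hk2]⟩
  have hr1 : ∀ j ∈ R T1, (apply T2 σ).1 j = σ j := fun j hj =>
    hmod T2 σ j (fun hw => (d2 j hw).1 hj)
  have hr2 : ∀ j ∈ R T2, (apply T1 σ).1 j = σ j := fun j hj =>
    hmod T1 σ j (fun hw => (d1 j hw).1 hj)
  refine ⟨funext fun k => ?_, (hdep T1 σ _ (fun j hj => (hr1 j hj).symm)).1,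
    (hdep T2 σ _ (fun j hj => (hr2 j hj).symm)).1⟩
  by_cases hk1 : k ∈ W T1
  · have hk2 : k ∉ W T2 := (d1 k hk1).2
    rw [hmod T2 _ k hk2, (hdep T1 (apply T2 σ).1 σ hr1).2 k hk1]
  · by_cases hk2 : k ∈ W T2
    · rw [hmod T1 _ k hk1, (hdep T2 (apply T1 σ).1 σ hr2).2 k hk2]
    · rw [hmod T2 _ k hk2, hmod T1 σ k hk1, hmod T1 _ k hk1, hmod T2 σ k hk2]

/-- Inserting a transaction past smaller, non-conflicting ones preserves
execution state and permutes the results. -/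
lemma exec_orderedInsert [LinearOrder τ]
    (hmod : ∀ T σ k, k ∉ W T → (apply T σ).1 k = σ k)
    (hdep : ∀ T σ σ', (∀ k ∈ R T, σ k = σ' k) →
      (apply T σ).2 = (apply T σ').2 ∧ ∀ k ∈ W T, (apply T σ).1 k = (apply T σ').1 k)
    (T : τ) (l : List τ) (h : ∀ b ∈ l, b < T → ¬ conflict R W apply T b) (σ : K → V) :
    execState apply (List.orderedInsert (· ≤ ·) T l) σ = execState apply (T :: l) σ ∧
    (execResults apply (List.orderedInsert (· ≤ ·) T l) σ).Perm
      (execResults apply (T :: l) σ) := by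
  induction l generalizing σ with
  | nil => simp [List.orderedInsert]
  | cons b l ih =>
    by_cases hTb : T ≤ b
    · simp [List.orderedInsert, hTb]
    · have hb : b < T := not_le.mp hTb
      obtain ⟨hs, hr1, hr2⟩ :=
        comm_key R W apply hmod hdep (h b List.mem_cons_self hb) σ
      have ih' := ih (fun b' hb' => h b' (List.mem_cons_of_mem _ hb')) (apply b σ).1
      simp only [List.orderedInsert, if_neg hTb]
      constructor
      · show execState apply (List.orderedInsert _ T l) (apply b σ).1 = _
        rw [ih'.1]
        show execState apply l (apply T (apply b σ).1).1 =
          execState apply l (apply b (apply T σ).1).1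
        rw [hs]
      · show ((b, (apply b σ).2) ::
            execResults apply (List.orderedInsert _ T l) (apply b σ).1).Perm _
        refine ((ih'.2).cons _).trans ?_
        show ((b, (apply b σ).2) :: (T, (apply T (apply b σ).1).2) ::
            execResults apply l (apply T (apply b σ).1).1).Perm
          ((T, (apply T σ).2) :: (b, (apply b (apply T σ).1).2) ::
            execResults apply l (apply b (apply T σ).1).1)
        rw [hs, hr1, hr2]
        exact List.Perm.swap _ _ _

end Aux

/-- Reordering a list of distinct transactions into canonical order, when every
out-of-order pair is non-conflicting, preserves the final state and every
transaction's result. -/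
theorem reorder_to_canonical
    {K V Res τ : Type*} [LinearOrder τ]
    (R W : τ → Set K)
    (apply : τ → (K → V) → (K → V) × Res)
    (hmod : ∀ T σ k, k ∉ W T → (apply T σ).1 k = σ k)
    (hdep : ∀ T σ σ', (∀ k ∈ R T, σ k = σ' k) →
      (apply T σ).2 = (apply T σ').2 ∧ ∀ k ∈ W T, (apply T σ).1 k = (apply T σ').1 k)
    (L : List τ) (hnodup : L.Nodup)
    -- every out-of-order pair (w.r.t. the canonical linear order) is non-conflicting
    (hooo : ∀ T1 T2 : τ, [T1, T2].Sublist L → T2 < T1 →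
      ¬ conflict R W apply T1 T2)
    (σ : K → V) :
    execState apply (L.insertionSort (· ≤ ·)) σ = execState apply L σ ∧
      ∀ T r, ((T, r) ∈ execResults apply L σ ↔
        (T, r) ∈ execResults apply (L.insertionSort (· ≤ ·)) σ) := by
  suffices h : execState apply (L.insertionSort (· ≤ ·)) σ = execState apply L σ ∧
      (execResults apply (L.insertionSort (· ≤ ·)) σ).Perm (execResults apply L σ) by
    exact ⟨h.1, fun T r => (h.2.mem_iff).symm⟩
  clear hnodup
  induction L generalizing σ with
  | nil => simp
  | cons T L ih =>
    have hooo' : ∀ T1 T2 : τ, [T1, T2].Sublist L → T2 < T1 →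
        ¬ conflict R W apply T1 T2 :=
      fun T1 T2 hs => hooo T1 T2 (hs.trans (List.sublist_cons_self _ _))
    have hins : ∀ b ∈ L.insertionSort (· ≤ ·), b < T → ¬ conflict R W apply T b := by
      intro b hb hbT
      have hbL : b ∈ L := (List.perm_insertionSort (· ≤ ·) L).mem_iff.mp hb
      have hsub : [T, b].Sublist (T :: L) :=
        List.cons_sublist_cons.mpr (List.singleton_sublist.mpr hbL)
      exact hooo T b hsub hbT
    obtain ⟨he, hp⟩ := exec_orderedInsert R W apply hmod hdep T
      (L.insertionSort (· ≤ ·)) hins σ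
    rw [List.insertionSort_cons]
    constructor
    · rw [he]
      show execState apply (L.insertionSort _) (apply T σ).1 =
        execState apply L (apply T σ).1
      exact (ih hooo' _).1
    · refine hp.trans ?_
      show ((T, (apply T σ).2) ::
          execResults apply (L.insertionSort _) (apply T σ).1).Perm _
      exact ((ih hooo' _).2).cons _
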